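/- For the disagreement chain of the noisy voter model started from the all-ones configuration, the probability of disagreement at any site decays exponentially at rate 2δ/(2δ+1): for every t ≥ 0, max_{v ∈ V(G)} P(Z_t(v) = 1) ≤ exp(−(2δ/(2δ+1))·t). -/

import Mathlib

open Finset

/-- Flip rate of the disagreement chain of the noisy voter model at vertex `v` in
configuration `η`: `(2δ/(2δ+1))·1{η(v)=1} + (1/(2δ+1))·(1/d(v))·#{u ~ v : η(u) ≠ η(v)}`. -/
noncomputable def dzRate {V : Type*} [Fintype V] (G : SimpleGraph V) [DecidableRel G.Adj]
    (δ : ℝ) (v : V) (η : V → Bool) : ℝ :=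
  (2 * δ / (2 * δ + 1)) * (if η v = true then 1 else 0) +
    (1 / (2 * δ + 1)) * (1 / (G.degree v : ℝ)) *
      ((Finset.univ.filter fun u => G.Adj v u ∧ η u ≠ η v).card : ℝ)

/-- The rate matrix of the disagreement chain: single-spin flips occur at rate `dzRate`,
transitions changing two or more spins have rate `0`, and diagonal entries make rows sum to `0`. -/
noncomputable def dzQ {V : Type*} [Fintype V] [DecidableEq V] (G : SimpleGraph V)
    [DecidableRel G.Adj] (δ : ℝ) : Matrix (V → Bool) (V → Bool) ℝ := fun η η' =>
  if η = η' then -∑ v, dzRate G δ v η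
  else if (Finset.univ.filter fun v => η v ≠ η' v).card = 1 then
    ∑ v ∈ Finset.univ.filter (fun v => η v ≠ η' v), dzRate G δ v η
  else 0

set_option linter.unreachableTactic false
set_option linter.unusedTactic false

section Aux

variable {V : Type*} [Fintype V] [DecidableEq V]

def dzFlip (η : V → Bool) (u : V) : V → Bool := Function.update η u (!(η u))

lemma dzFlip_ne (η : V → Bool) (u : V) : dzFlip η u ≠ η := by
  intro h
  have := congrFun h u
  simp [dzFlip] at this

lemma dzFlip_filter (η : V → Bool) (u : V) :
    (Finset.univ.filter fun w => η w ≠ dzFlip η u w) = {u} := by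
  ext w
  simp only [mem_filter, mem_univ, true_and, mem_singleton, dzFlip]
  refine (Finset.mem_filter (p := fun w => η w ≠ dzFlip η u w)).trans ?_
  by_cases hw : w = u
  · subst hw; simp [dzFlip]
  · simp [dzFlip, Function.update_of_ne hw, hw]

lemma dzFlip_injective (η : V → Bool) : Function.Injective (dzFlip η) := by
  intro u u' h
  by_contra hne
  have h1 := congrFun h u
  rw [show dzFlip η u u = !(η u) from Function.update_self u _ η,
    show dzFlip η u' u = η u from Function.update_of_ne hne _ η] at h1
  simp at h1

lemma eq_dzFlip_of_filter_eq {η η' : V → Bool} {u : V}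
    (h : (Finset.univ.filter fun w => η w ≠ η' w) = {u}) : η' = dzFlip η u := by
  funext w
  by_cases hw : w = u
  · subst hw
    have hu : η w ≠ η' w := by
      have : w ∈ (Finset.univ.filter fun x => η x ≠ η' x) := by rw [h]; exact mem_singleton_self w
      simpa using this
    simp only [dzFlip, Function.update_self]
    cases hη : η w <;> cases hη' : η' w <;> simp_all
  · have : w ∉ (Finset.univ.filter fun x => η x ≠ η' x) := by rw [h]; simpa using hw
    simp only [mem_filter, mem_univ, true_and, not_not] at this
    simp [dzFlip, Function.update_of_ne hw, ← this]

/-- The indicator "matrix" `W η v = 1{η v = 1}`. -/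
noncomputable def dzW : Matrix (V → Bool) V ℝ := fun η v => if η v = true then 1 else 0

/-- The vertex-to-vertex matrix intertwining `dzQ` with `dzW`. -/
noncomputable def dzM (G : SimpleGraph V) [DecidableRel G.Adj] (δ : ℝ) : Matrix V V ℝ :=
  fun u v => (if u = v then -1 else 0) +
    (1 / (2 * δ + 1)) * (1 / (G.degree v : ℝ)) * (if G.Adj v u then 1 else 0)

variable (G : SimpleGraph V) [DecidableRel G.Adj] (δ : ℝ)

lemma dzQ_apply_flip (η : V → Bool) (u : V) :
    dzQ G δ η (dzFlip η u) = dzRate G δ u η := by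
  rw [dzQ, if_neg (fun h => dzFlip_ne η u h.symm), dzFlip_filter, if_pos (by simp),
    Finset.sum_singleton]

lemma dzQ_mul_W_apply (hδ : 0 < δ) (hdeg : ∀ w, 1 ≤ G.degree w) (η : V → Bool) (v : V) :
    ∑ η' : V → Bool, dzQ G δ η η' * dzW η' v = ∑ u : V, dzW η u * dzM G δ u v := by
  have hc : (2 * δ + 1) ≠ 0 := by positivity
  have hdv : (G.degree v : ℝ) ≠ 0 := by
    have := hdeg v; positivity
  -- split off the diagonal term
  have hsplit : ∑ η' : V → Bool, dzQ G δ η η' * dzW η' v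
      = dzQ G δ η η * dzW η v + ∑ u : V, dzRate G δ u η * dzW (dzFlip η u) v := by
    rw [← Finset.add_sum_erase _ _ (Finset.mem_univ η)]
    congr 1
    have hsub : Finset.univ.image (dzFlip η) ⊆ Finset.univ.erase η := by
      intro x hx
      simp only [Finset.mem_image] at hx
      obtain ⟨u, -, rfl⟩ := hx
      exact Finset.mem_erase.2 ⟨dzFlip_ne η u, Finset.mem_univ _⟩
    have hzero : ∀ η' ∈ Finset.univ.erase η, η' ∉ Finset.univ.image (dzFlip η) →
        dzQ G δ η η' * dzW η' v = 0 := by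
      intro η' hη' hnot
      have hne : η ≠ η' := fun h => (Finset.mem_erase.1 hη').1 h.symm
      have hcard : (Finset.univ.filter fun w => η w ≠ η' w).card ≠ 1 := by
        intro hcard
        obtain ⟨u, hu⟩ := Finset.card_eq_one.1 hcard
        exact hnot (Finset.mem_image.2 ⟨u, Finset.mem_univ u, (eq_dzFlip_of_filter_eq hu).symm⟩)
      rw [dzQ, if_neg hne, if_neg hcard, zero_mul]
    rw [← Finset.sum_subset hsub hzero, Finset.sum_image
      (fun a _ b _ h => dzFlip_injective η h)]
    exact Finset.sum_congr rfl fun u _ => by rw [dzQ_apply_flip]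
  rw [hsplit, dzQ, if_pos rfl]
  -- reduce the LHS to the single term at `v`
  have hdiag : (-∑ w, dzRate G δ w η) * dzW η v = ∑ u : V, -(dzRate G δ u η * dzW η v) := by
    rw [neg_mul, Finset.sum_mul, ← Finset.sum_neg_distrib]
  rw [hdiag, ← Finset.sum_add_distrib]
  have hterm : ∀ u : V, -(dzRate G δ u η * dzW η v) + dzRate G δ u η * dzW (dzFlip η u) v
      = if u = v then dzRate G δ v η * (dzW (dzFlip η v) v - dzW η v) else 0 := by
    intro u
    by_cases hu : u = v
    · subst hu; rw [if_pos rfl]; ring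
    · rw [if_neg hu]
      have : dzW (dzFlip η u) v = dzW η v := by
        simp [dzW, dzFlip, Function.update_of_ne (fun h => hu h.symm)]
      rw [this]; ring
  rw [Finset.sum_congr rfl fun u _ => hterm u, Finset.sum_ite_eq' Finset.univ v, if_pos (Finset.mem_univ v)]
  -- compute the RHS
  have hRHS : ∑ u : V, dzW η u * dzM G δ u v
      = dzW η v * (-1) + (1 / (2 * δ + 1)) * (1 / (G.degree v : ℝ)) *
          ((Finset.univ.filter fun u => G.Adj v u ∧ η u = true).card : ℝ) := by
    simp only [dzM, mul_add]
    rw [Finset.sum_add_distrib]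
    congr 1
    · rw [show (∑ u : V, dzW η u * if u = v then (-1:ℝ) else 0)
          = ∑ u : V, if u = v then -dzW η u else 0 from
        Finset.sum_congr rfl (fun u _ => by split_ifs <;> ring)]
      rw [Finset.sum_ite_eq' Finset.univ v, if_pos (Finset.mem_univ v)]
      ring
    · have hx : ∀ x : V, dzW η x * ((1/(2*δ+1)) * (1/(G.degree v:ℝ)) * if G.Adj v x then 1 else 0)
          = (1/(2*δ+1)) * (1/(G.degree v:ℝ)) * (if G.Adj v x ∧ η x = true then 1 else 0) := by
        intro x
        simp only [dzW]
        split_ifs <;> simp_all <;> ring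
      rw [Finset.sum_congr rfl fun x _ => hx x, ← Finset.mul_sum, Finset.sum_boole]
  rw [hRHS, dzRate]
  have hflip : dzW (dzFlip η v) v = if (!(η v)) = true then 1 else 0 := by
    simp [dzW, dzFlip]
  rw [hflip]
  cases h : η v with
  | false =>
    have hfil : (Finset.univ.filter fun u => G.Adj v u ∧ η u ≠ false)
        = Finset.univ.filter fun u => G.Adj v u ∧ η u = true := by
      apply Finset.filter_congr
      intro u _
      simp
    rw [hfil]
    simp only [dzW, h]
    norm_num
  | true =>
    have hcards : (((Finset.univ.filter fun u => G.Adj v u ∧ η u = true).card : ℝ)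
        + ((Finset.univ.filter fun u => G.Adj v u ∧ η u ≠ true).card : ℝ))
        = (G.degree v : ℝ) := by
      rw [← Nat.cast_add]
      norm_cast
      rw [← Finset.filter_filter, ← Finset.filter_filter,
        Finset.card_filter_add_card_filter_not]
      rw [show G.degree v = (G.neighborFinset v).card from rfl,
        SimpleGraph.neighborFinset_eq_filter]
    have hN : (((Finset.univ.filter fun u => G.Adj v u ∧ η u ≠ true).card : ℝ))
        = (G.degree v : ℝ) - ((Finset.univ.filter fun u => G.Adj v u ∧ η u = true).card : ℝ) := by
      linarith [hcards]
    rw [hN]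
    simp only [dzW, h]
    norm_num
    field_simp
    ring

lemma dzM_col_sum (hδ : 0 < δ) (hdeg : ∀ w, 1 ≤ G.degree w) (v : V) :
    ∑ u : V, dzM G δ u v = -(2 * δ / (2 * δ + 1)) := by
  have hc : (2 * δ + 1) ≠ 0 := by positivity
  have hdv : (G.degree v : ℝ) ≠ 0 := by
    have := hdeg v; positivity
  simp only [dzM]
  rw [Finset.sum_add_distrib, Finset.sum_ite_eq' Finset.univ v, if_pos (Finset.mem_univ v),
    ← Finset.mul_sum, Finset.sum_boole]
  have : (Finset.univ.filter fun u => G.Adj v u) = G.neighborFinset v := by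
    rw [SimpleGraph.neighborFinset_eq_filter]
  rw [this, show (G.neighborFinset v).card = G.degree v from rfl]
  field_simp
  ring

lemma dzQ_pow_key (hδ : 0 < δ) (hdeg : ∀ w, 1 ≤ G.degree w) (t : ℝ) (n : ℕ) (v : V) :
    ∑ η : V → Bool, ((t • dzQ G δ) ^ n) (fun _ => true) η * dzW η v
      = (-(2 * δ / (2 * δ + 1)) * t) ^ n := by
  induction n generalizing v with
  | zero =>
    simp only [pow_zero, Matrix.one_apply]
    rw [Finset.sum_congr rfl fun η _ => by rw [ite_mul, one_mul, zero_mul],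
      Finset.sum_ite_eq Finset.univ (fun _ => true) (fun η => dzW η v),
      if_pos (Finset.mem_univ _)]
    simp [dzW]
  | succ n ih =>
    rw [pow_succ]
    have h1 : ∀ η : V → Bool, ((t • dzQ G δ) ^ n * (t • dzQ G δ)) (fun _ => true) η
        = ∑ η' : V → Bool, ((t • dzQ G δ) ^ n) (fun _ => true) η' * (t * dzQ G δ η' η) := by
      intro η
      rw [Matrix.mul_apply]
      exact Finset.sum_congr rfl fun η' _ => by rw [Matrix.smul_apply, smul_eq_mul]
    calc ∑ η : V → Bool, ((t • dzQ G δ) ^ n * (t • dzQ G δ)) (fun _ => true) η * dzW η v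
        = ∑ η : V → Bool, ∑ η' : V → Bool,
            ((t • dzQ G δ) ^ n) (fun _ => true) η' * (t * dzQ G δ η' η) * dzW η v := by
          exact Finset.sum_congr rfl fun η _ => by rw [h1, Finset.sum_mul]
      _ = ∑ η' : V → Bool, ((t • dzQ G δ) ^ n) (fun _ => true) η' *
            (t * ∑ η : V → Bool, dzQ G δ η' η * dzW η v) := by
          rw [Finset.sum_comm]
          refine Finset.sum_congr rfl fun η' _ => ?_
          simp only [Finset.mul_sum]
          exact Finset.sum_congr rfl fun η _ => by ring
      _ = ∑ η' : V → Bool, ((t • dzQ G δ) ^ n) (fun _ => true) η' *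
            (t * ∑ u : V, dzW η' u * dzM G δ u v) := by
          exact Finset.sum_congr rfl fun η' _ => by
            rw [dzQ_mul_W_apply G δ hδ hdeg η' v]
      _ = ∑ u : V, (∑ η' : V → Bool, ((t • dzQ G δ) ^ n) (fun _ => true) η' * dzW η' u)
            * (t * dzM G δ u v) := by
          simp only [Finset.mul_sum, Finset.sum_mul]
          rw [Finset.sum_comm]
          exact Finset.sum_congr rfl fun u _ => Finset.sum_congr rfl fun η' _ => by ring
      _ = ∑ u : V, (-(2 * δ / (2 * δ + 1)) * t) ^ n * (t * dzM G δ u v) := by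
          exact Finset.sum_congr rfl fun u _ => by rw [ih u]
      _ = (-(2 * δ / (2 * δ + 1)) * t) ^ n * t * ∑ u : V, dzM G δ u v := by
          rw [Finset.mul_sum]
          exact Finset.sum_congr rfl fun u _ => by ring
      _ = (-(2 * δ / (2 * δ + 1)) * t) ^ (n + 1) := by
          rw [dzM_col_sum G δ hδ hdeg v, pow_succ]
          ring

end Aux

/-- `P(Z_t(v) = 1)`: the probability that the disagreement chain started from the all-ones
configuration has a disagreement (spin `1`) at vertex `v` at time `t`. -/
noncomputable def probDisagree {V : Type*} [Fintype V] [DecidableEq V] (G : SimpleGraph V)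
    [DecidableRel G.Adj] (δ : ℝ) (t : ℝ) (v : V) : ℝ :=
  ∑ η ∈ Finset.univ.filter (fun η : V → Bool => η v = true),
    NormedSpace.exp (t • dzQ G δ) (fun _ => true) η

/-- For the disagreement chain of the noisy voter model started from the all-ones
configuration, the probability of disagreement at any site decays exponentially:
`max_v P(Z_t(v) = 1) ≤ exp(−(2δ/(2δ+1))·t)` for every `t ≥ 0`. -/
theorem disagreement_probability_decay
    {V : Type*} [Fintype V] [DecidableEq V] (δ : ℝ) (hδ : 0 < δ)
    (G : SimpleGraph V) [DecidableRel G.Adj] (hdeg : ∀ v, 1 ≤ G.degree v)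
    (t : ℝ) (ht : 0 ≤ t) (v : V) :
    probDisagree G δ t v ≤ Real.exp (-(2 * δ / (2 * δ + 1)) * t) := by
  letI : SeminormedRing (Matrix (V → Bool) (V → Bool) ℝ) := Matrix.linftyOpSemiNormedRing
  letI : NormedRing (Matrix (V → Bool) (V → Bool) ℝ) := Matrix.linftyOpNormedRing
  letI : NormedAlgebra ℝ (Matrix (V → Bool) (V → Bool) ℝ) := Matrix.linftyOpNormedAlgebra
  set A := t • dzQ G δ with hA
  let L : Matrix (V → Bool) (V → Bool) ℝ →ₗ[ℝ] ℝ :=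
    { toFun := fun P => ∑ η : V → Bool, P (fun _ => true) η * dzW η v
      map_add' := fun P Q => by
        simp only [Matrix.add_apply, add_mul, Finset.sum_add_distrib]
      map_smul' := fun c P => by
        simp only [Matrix.smul_apply, smul_eq_mul, RingHom.id_apply, Finset.mul_sum, mul_assoc]
    }
  have hLcont : Continuous L := L.continuous_of_finiteDimensional
  have hsum : HasSum (fun n : ℕ => ((Nat.factorial n : ℝ))⁻¹ • A ^ n) (NormedSpace.exp A) :=
    NormedSpace.exp_series_hasSum_exp' A
  have hmap := (hsum.map L.toAddMonoidHom hLcont).tsum_eq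
  have hexp : L (NormedSpace.exp A) = ∑' n : ℕ,
      ((Nat.factorial n : ℝ))⁻¹ * (-(2 * δ / (2 * δ + 1)) * t) ^ n := by
    simp only [LinearMap.toAddMonoidHom_coe] at hmap
    rw [← hmap]
    refine tsum_congr fun n => ?_
    show L (((Nat.factorial n : ℝ))⁻¹ • A ^ n) = _
    rw [map_smul, smul_eq_mul]
    congr 1
    exact dzQ_pow_key G δ hδ hdeg t n v
  have hre : (∑' n : ℕ, ((Nat.factorial n : ℝ))⁻¹ * (-(2 * δ / (2 * δ + 1)) * t) ^ n)
      = Real.exp (-(2 * δ / (2 * δ + 1)) * t) := by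
    rw [Real.exp_eq_exp_ℝ, NormedSpace.exp_eq_tsum ℝ]
    simp [smul_eq_mul]
  have hPD : probDisagree G δ t v = L (NormedSpace.exp A) := by
    show _ = ∑ η : V → Bool, NormedSpace.exp A (fun _ => true) η * dzW η v
    rw [probDisagree, Finset.sum_filter]
    refine Finset.sum_congr rfl fun η _ => ?_
    by_cases h : η v = true
    · rw [if_pos h]; simp [dzW, h, hA]
    · rw [if_neg h]; simp [dzW, h]
  rw [hPD, hexp, hre]
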